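/- The function q^∞(f=0|θ) = max(0, p^π(f=0|θ) − α·(p_D(θ)·p^π(f=0))/p(θ)), where p^π(f=0) = ∫ p^π(f=0|θ)·p(θ) dθ, together with the normalizer q^∞(f=0) = (1−α)·p^π(f=0), satisfies the fixed-point equation q(f=0|θ) = p^π(f=0|θ)·(1−α)ρ(θ)/(α·p_D(θ) + (1−α)·ρ(θ)) with ρ(θ) = q(f=0|θ)·p(θ)/q(f=0), at every θ where the fixed point is strictly positive. -/

import Mathlib

open MeasureTheory

/-- The function `q^∞(f=0|θ) = max(0, p^π(f=0|θ) - α p_D(θ) p^π(f=0) / p(θ))`, with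
normalizer `q^∞(f=0) = (1-α) p^π(f=0)` where `p^π(f=0) = ∫ p^π(f=0|θ) p(θ) dθ`, satisfies
the fixed-point equation of the classifier/rejection-sampling iteration at every `θ` where it
is strictly positive. -/
theorem classifier_fixed_point {Θ : Type*} [MeasurableSpace Θ] (μ : Measure Θ)
    (α P0 : ℝ) (hα : α ∈ Set.Ioo (0 : ℝ) 1)
    (p pD ppi : Θ → ℝ)
    (hp : ∀ θ, 0 < p θ) (hpD : ∀ θ, 0 ≤ pD θ)
    (hppi : ∀ θ, ppi θ ∈ Set.Icc (0 : ℝ) 1)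
    (hP0 : P0 = ∫ θ, ppi θ * p θ ∂μ) (hP0pos : 0 < P0)
    (qinf : Θ → ℝ) (hqinf : ∀ θ, qinf θ = max 0 (ppi θ - α * (pD θ * P0) / p θ))
    (Zinf : ℝ) (hZ : Zinf = (1 - α) * P0)
    (ρ : Θ → ℝ) (hρ : ∀ θ, ρ θ = qinf θ * p θ / Zinf)
    (θ : Θ) (hpos : 0 < qinf θ) :
    qinf θ = ppi θ * ((1 - α) * ρ θ) / (α * pD θ + (1 - α) * ρ θ) := by
  obtain ⟨hα0, hα1⟩ := hα
  have h1α : 0 < 1 - α := by linarith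
  have hpθ := hp θ
  have hq : qinf θ = ppi θ - α * (pD θ * P0) / p θ := by
    have h := hqinf θ
    rcases le_or_gt (ppi θ - α * (pD θ * P0) / p θ) 0 with h0 | h0
    · exact absurd (h ▸ hpos) (by simp [max_eq_left h0])
    · rw [h, max_eq_right h0.le]
  have hppi_pos : 0 < ppi θ := by
    have hnn : 0 ≤ α * (pD θ * P0) / p θ :=
      div_nonneg (mul_nonneg hα0.le (mul_nonneg (hpD θ) hP0pos.le)) hpθ.le
    nlinarith [hq ▸ hpos]
  have hρθ : ρ θ = qinf θ * p θ / Zinf := hρ θ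
  have hqp : qinf θ * p θ = ppi θ * p θ - α * (pD θ * P0) := by
    rw [hq]; field_simp
  have hden : α * pD θ + (1 - α) * ρ θ = ppi θ * p θ / P0 := by
    rw [hρθ, hZ]
    have hne : (1 - α) * P0 ≠ 0 := by positivity
    field_simp
    linear_combination hqp
  have hkey : ppi θ * ((1 - α) * ρ θ) = qinf θ * (ppi θ * p θ / P0) := by
    rw [hρθ, hZ]
    field_simp
  rw [hden, hkey, mul_div_assoc, div_self (by positivity : ppi θ * p θ / P0 ≠ 0), mul_one]
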